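/- arXiv:1306.0093 — 3 statements merged into one kernel-verified Lean document; each statement's English description precedes it below -/
import Mathlib

section
/- Let G₁ and G₂ be graphs with n₁ and n₂ vertices respectively, each with at least 2 edges. Suppose S⁺_{k_i}(G_i) ≤ e(G_i) + k_i(k_i+1)/2 for all 1 ≤ k_i ≤ n_i and i = 1,2, and suppose additionally that S⁺_k(H) ≤ e(H) + k(k+1)/2 holds for k = 1, 2 for every graph H. Let G₁≈G₂ denote a graph obtained from the disjoint union G₁ ∪ G₂ by adding two edges between V(G₁) and V(G₂). Then for all 1 ≤ k ≤ n₁+n₂, S⁺_k(G₁≈G₂) ≤ e(G₁≈G₂) + k(k+1)/2. -/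
open Matrix Polynomial

/-- Sum of the `k` largest entries of a finitely-indexed family of reals. -/
noncomputable def sumKLargest {V : Type*} [Fintype V] (v : V → ℝ) (k : ℕ) : ℝ :=
  (((Finset.univ.val.map v).toList.mergeSort (fun a b => decide (b ≤ a))).take k).sum

open Classical in
/-- The signless Laplacian matrix `Q(G) = D(G) + A(G)` of a simple graph. -/
noncomputable def signlessLap {V : Type*} [Fintype V] [DecidableEq V]
    (G : SimpleGraph V) : Matrix V V ℝ :=
  G.degMatrix ℝ + G.adjMatrix ℝ

theorem signlessLap_isHermitian {V : Type*} [Fintype V] [DecidableEq V]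
    (G : SimpleGraph V) : (signlessLap G).IsHermitian := by
  classical
  ext i j
  by_cases h : i = j
  · subst h; simp [signlessLap]
  · simp [signlessLap, Matrix.conjTranspose_apply, SimpleGraph.degMatrix,
      Matrix.diagonal_apply, h, Ne.symm h, SimpleGraph.adj_comm]

/-- `S⁺_k(G)`: the sum of the `k` largest signless Laplacian eigenvalues of `G`. -/
noncomputable def Splus {V : Type*} [Fintype V] [DecidableEq V]
    (G : SimpleGraph V) (k : ℕ) : ℝ :=
  sumKLargest (signlessLap_isHermitian G).eigenvalues k

/-- `e(G)`: the number of edges of `G`. -/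
noncomputable def numEdges {V : Type*} (G : SimpleGraph V) : ℕ := G.edgeSet.ncard


/-- `G₁ ≈ G₂`: the graph obtained from the disjoint union of `G₁` and `G₂` by adding the
two edges `u₁v₁` and `u₂v₂` between `V(G₁)` and `V(G₂)`. -/
def connect2Graphs {V₁ V₂ : Type*} [DecidableEq V₁] [DecidableEq V₂]
    (G₁ : SimpleGraph V₁) (G₂ : SimpleGraph V₂)
    (u₁ u₂ : V₁) (v₁ v₂ : V₂) : SimpleGraph (V₁ ⊕ V₂) where
  Adj x y := match x, y with
    | .inl a, .inl b => G₁.Adj a b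
    | .inr a, .inr b => G₂.Adj a b
    | .inl a, .inr b => (a = u₁ ∧ b = v₁) ∨ (a = u₂ ∧ b = v₂)
    | .inr b, .inl a => (a = u₁ ∧ b = v₁) ∨ (a = u₂ ∧ b = v₂)
  symm := by
    constructor
    rintro (a | a) (b | b) h
    · exact G₁.adj_symm h
    · exact h
    · exact h
    · exact G₂.adj_symm h
  loopless := by
    constructor
    rintro (a | a) h
    · exact G₁.irrefl h
    · exact G₂.irrefl h

open Matrix Polynomial

noncomputable def msSum (s : Multiset ℝ) (k : ℕ) : ℝ :=
  ((s.toList.mergeSort (fun a b => decide (b ≤ a))).take k).sum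

noncomputable def sortD (s : Multiset ℝ) : List ℝ :=
  s.toList.mergeSort (fun a b => decide (b ≤ a))

lemma sortD_coe (s : Multiset ℝ) : ((sortD s : List ℝ) : Multiset ℝ) = s := by
  have h1 : (sortD s).Perm s.toList := List.mergeSort_perm _ _
  have h2 : (↑(s.toList) : Multiset ℝ) = s := s.coe_toList
  exact (Quot.sound h1).trans h2

lemma sortD_sorted (s : Multiset ℝ) : (sortD s).Pairwise (· ≥ ·) := by
  have := List.pairwise_mergeSort (le := fun a b : ℝ => decide (b ≤ a))
    (fun a b c hab hbc => by simp_all; linarith)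
    (fun a b => by simpa using le_total b a) s.toList
  refine this.imp ?_
  intro a b h; simpa using h

lemma msSum_eq (s : Multiset ℝ) (k : ℕ) : msSum s k = ((sortD s).take k).sum := rfl

lemma take_sum_le_cons (x : ℝ) (l : List ℝ) (h : (x::l).Pairwise (· ≥ ·)) (k : ℕ)
    (hk : k ≤ l.length) : (l.take k).sum ≤ ((x::l).take k).sum := by
  cases k with
  | zero => simp
  | succ n =>
    rw [List.take_succ_cons, List.sum_cons, List.take_succ]
    have hn : n < l.length := hk
    rw [List.getElem?_eq_getElem hn]
    simp only [Option.toList_some, List.sum_append, List.sum_cons, List.sum_nil]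
    have hx : l[n] ≤ x := by
      rcases List.pairwise_cons.mp h with ⟨h1, _⟩
      exact h1 _ (l.getElem_mem hn)
    linarith

lemma sum_le_sum_take : ∀ (l : List ℝ), l.Pairwise (· ≥ ·) → ∀ (u : Multiset ℝ), u ≤ ↑l →
    u.sum ≤ (l.take u.card).sum := by
  intro l
  induction l with
  | nil =>
    intro _ u hu
    have : u = 0 := le_antisymm (by simpa using hu) (Multiset.zero_le u)
    simp [this]
  | cons x l ih =>
    intro hs u hu
    have hs' : l.Pairwise (· ≥ ·) := (List.pairwise_cons.mp hs).2
    by_cases hx : x ∈ u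
    · have h1 : u.erase x ≤ ↑l := by
        rw [Multiset.erase_le_iff_le_cons]
        simpa using hu
      have hcard : u.card = (u.erase x).card + 1 := (Multiset.card_erase_add_one hx).symm
      have hsum : u.sum = x + (u.erase x).sum := by
        rw [← Multiset.sum_cons, Multiset.cons_erase hx]
      rw [hcard, hsum, List.take_succ_cons, List.sum_cons]
      have := ih hs' (u.erase x) h1
      linarith
    · have h1 : u ≤ ↑l := by
        rw [Multiset.le_iff_count] at hu ⊢
        intro a
        have h2 := hu a
        by_cases hax : a = x
        · subst hax
          simp [Multiset.count_eq_zero_of_notMem hx]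
        · rwa [← Multiset.cons_coe, Multiset.count_cons_of_ne hax] at h2
      have hk : u.card ≤ l.length := by
        have := Multiset.card_le_card h1
        simpa using this
      exact le_trans (ih hs' u h1) (take_sum_le_cons x l hs _ hk)

lemma sum_le_msSum {s u : Multiset ℝ} (hu : u ≤ s) : u.sum ≤ msSum s u.card := by
  rw [msSum_eq]
  exact sum_le_sum_take (sortD s) (sortD_sorted s) u (by rw [sortD_coe]; exact hu)

lemma msSum_exists (s : Multiset ℝ) (k : ℕ) (hk : k ≤ Multiset.card s) :
    ∃ u : Multiset ℝ, u ≤ s ∧ Multiset.card u = k ∧ u.sum = msSum s k := by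
  have hlen : (sortD s).length = Multiset.card s := by
    conv_rhs => rw [← sortD_coe s]
    simp
  refine ⟨↑((sortD s).take k), ?_, ?_, ?_⟩
  · have h := (List.take_sublist k (sortD s)).subperm
    rw [← Multiset.coe_le] at h
    · exact le_of_le_of_eq h (sortD_coe s)
  · simp [List.length_take, hlen, hk]
  · rw [msSum_eq]; rfl

lemma msSum_le_sum (s : Multiset ℝ) (h : ∀ x ∈ s, 0 ≤ x) (k : ℕ) : msSum s k ≤ s.sum := by
  have hsum : s.sum = (sortD s).sum := by
    conv_lhs => rw [← sortD_coe s]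
    exact Multiset.sum_coe _
  rw [msSum_eq, hsum]
  conv_rhs => rw [← List.take_append_drop k (sortD s)]
  rw [List.sum_append]
  have h0 : 0 ≤ ((sortD s).drop k).sum := by
    apply List.sum_nonneg
    intro x hx
    apply h
    rw [← sortD_coe s]
    exact List.mem_of_mem_drop hx
  linarith

lemma msSum_add_split (s t : Multiset ℝ) (k : ℕ) (hk : k ≤ Multiset.card s + Multiset.card t) :
    ∃ k₁ k₂ : ℕ, k₁ + k₂ = k ∧ k₁ ≤ Multiset.card s ∧ k₂ ≤ Multiset.card t ∧
      msSum (s + t) k ≤ msSum s k₁ + msSum t k₂ := by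
  classical
  obtain ⟨u, hu, hcard, hsum⟩ := msSum_exists (s + t) k (by simpa using hk)
  set u₂ : Multiset ℝ := u - s with hu₂def
  set u₁ : Multiset ℝ := u - u₂ with hu₁def
  have h2 : u₂ ≤ t := by
    rw [hu₂def, Multiset.sub_le_iff_le_add]
    rwa [add_comm] at hu
  have h12 : u₁ + u₂ = u := by
    rw [hu₁def]
    exact tsub_add_cancel_of_le (Multiset.sub_le_self u s)
  have h1 : u₁ ≤ s := by
    rw [Multiset.le_iff_count]
    intro a
    rw [hu₁def, hu₂def]
    simp only [Multiset.count_sub]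
    omega
  refine ⟨Multiset.card u₁, Multiset.card u₂, ?_, Multiset.card_le_card h1,
    Multiset.card_le_card h2, ?_⟩
  · rw [← hcard, ← h12]; simp
  · calc msSum (s + t) k = u₁.sum + u₂.sum := by rw [← hsum, ← h12]; simp
    _ ≤ _ := add_le_add (sum_le_msSum h1) (sum_le_msSum h2)

lemma exists_of_le_map {α β : Type*} [DecidableEq β] (f : α → β) :
    ∀ (s : Multiset α) (u : Multiset β), u ≤ s.map f → ∃ t, t ≤ s ∧ u = t.map f := by
  intro s
  induction s using Multiset.induction_on with
  | empty =>
    intro u hu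
    refine ⟨0, le_refl _, ?_⟩
    simpa using le_antisymm (by simpa using hu) (Multiset.zero_le u)
  | cons a s ih =>
    intro u hu
    rw [Multiset.map_cons] at hu
    by_cases hfa : f a ∈ u
    · have h1 : u.erase (f a) ≤ s.map f := by
        rwa [Multiset.erase_le_iff_le_cons]
      obtain ⟨t, ht, htu⟩ := ih _ h1
      refine ⟨a ::ₘ t, Multiset.cons_le_cons a ht, ?_⟩
      rw [Multiset.map_cons, ← htu, Multiset.cons_erase hfa]
    · have h1 : u ≤ s.map f := by
        rw [Multiset.le_iff_count] at hu ⊢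
        intro b
        have h2 := hu b
        by_cases hb : b = f a
        · subst hb; simp [Multiset.count_eq_zero_of_notMem hfa]
        · rwa [Multiset.count_cons_of_ne hb] at h2
      obtain ⟨t, ht, htu⟩ := ih _ h1
      exact ⟨t, le_trans ht (Multiset.le_cons_self s a), htu⟩
lemma sorted_getElem_le {l : List ℝ} (h : l.Pairwise (· ≥ ·)) {i j : ℕ} (hij : i ≤ j)
    (hj : j < l.length) : l[j] ≤ l[i] := by
  rcases eq_or_lt_of_le hij with rfl | hlt
  · exact le_refl _
  · exact h.rel_get_of_lt (a := ⟨i, lt_of_le_of_lt hij hj⟩) (b := ⟨j, hj⟩) hlt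

lemma list_sum_sub_const (m : List ℝ) (t : ℝ) :
    (m.map (fun x => x - t)).sum = m.sum - m.length * t := by
  induction m with
  | nil => simp
  | cons a m ih => simp [ih]; ring

lemma weighted_le_msSum {V : Type*} [Fintype V] (lam d : V → ℝ) (k : ℕ) (hk1 : 1 ≤ k)
    (hk : k ≤ Fintype.card V) (hd0 : ∀ j, 0 ≤ d j) (hd1 : ∀ j, d j ≤ 1)
    (hsum : ∑ j, d j = k) :
    ∑ j, d j * lam j ≤ msSum (Finset.univ.val.map lam) k := by
  classical
  set s := Finset.univ.val.map lam with hs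
  set l := sortD s with hl
  have hcoe : ((l : List ℝ) : Multiset ℝ) = s := sortD_coe s
  have hsort : l.Pairwise (· ≥ ·) := sortD_sorted s
  have hlen : l.length = Fintype.card V := by
    have h1 : Multiset.card ((l : List ℝ) : Multiset ℝ) = Multiset.card s := by rw [hcoe]
    simpa [hs] using h1
  have hk' : k - 1 < l.length := by omega
  set t := l[k-1] with ht
  set g : ℝ → ℝ := fun x => max (x - t) 0 with hg
  have key1 : ∀ x ∈ l.take k, t ≤ x := by
    intro x hx
    obtain ⟨i, hi, rfl⟩ := List.mem_iff_getElem.mp hx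
    rw [List.getElem_take]
    have hik : i < k := lt_of_lt_of_le hi (by simp [List.length_take])
    exact sorted_getElem_le hsort (by omega) (by omega)
  have key2 : ∀ x ∈ l.drop k, x ≤ t := by
    intro x hx
    obtain ⟨i, hi, rfl⟩ := List.mem_iff_getElem.mp hx
    rw [List.getElem_drop]
    exact sorted_getElem_le hsort (by omega) (by simp at hi; omega)
  have e1 : ∑ j, d j * (lam j - t) = (∑ j, d j * lam j) - k * t := by
    have h1 : ∀ j : V, d j * (lam j - t) = d j * lam j - d j * t := fun j => by ring
    simp_rw [h1]
    rw [Finset.sum_sub_distrib, ← Finset.sum_mul, hsum]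
  have e2 : ∑ j, d j * (lam j - t) ≤ ∑ j, g (lam j) := by
    apply Finset.sum_le_sum
    intro j _
    rcases le_or_gt t (lam j) with hle | hlt
    · have : lam j - t ≤ g (lam j) := le_max_left _ _
      nlinarith [hd0 j, hd1 j]
    · have : (0:ℝ) ≤ g (lam j) := le_max_right _ _
      nlinarith [hd0 j]
  have e3 : ∑ j : V, g (lam j) = (l.map g).sum := by
    have h1 : ∑ j : V, g (lam j) = ((s.map g)).sum := by
      rw [hs, Multiset.map_map]; rfl
    rw [h1, ← hcoe, Multiset.map_coe, Multiset.sum_coe]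
  have e4 : (l.map g).sum = ((l.take k).map g).sum + ((l.drop k).map g).sum := by
    conv_lhs => rw [← List.take_append_drop k l]
    rw [List.map_append, List.sum_append]
  have e5 : ((l.drop k).map g).sum = 0 := by
    apply List.sum_eq_zero
    intro x hx
    obtain ⟨y, hy, rfl⟩ := List.mem_map.mp hx
    simp [hg, max_eq_right, sub_nonpos.mpr (key2 y hy)]
  have e6 : ((l.take k).map g).sum = (l.take k).sum - k * t := by
    have h1 : (l.take k).map g = (l.take k).map (fun x => x - t) := by
      apply List.map_congr_left
      intro x hx
      simp [hg, max_eq_left, sub_nonneg.mpr (key1 x hx)]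
    rw [h1, list_sum_sub_const]
    have : (l.take k).length = k := by simp [List.length_take]; omega
    rw [this]
  have e7 : msSum s k = (l.take k).sum := msSum_eq s k
  have := e2
  rw [e1, e3, e4, e5, e6] at this
  linarith
section Spectral

open Matrix Polynomial

variable {V : Type*} [Fintype V] [DecidableEq V]

lemma charpoly_conj (U : (Matrix V V ℝ)ˣ) (A : Matrix V V ℝ) :
    ((U : Matrix V V ℝ) * A * (↑U⁻¹ : Matrix V V ℝ)).charpoly = A.charpoly := by
  set mc := (RingHom.mapMatrix (C : ℝ →+* ℝ[X]) : Matrix V V ℝ →+* Matrix V V ℝ[X]) with hmc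
  have hone : mc (U : Matrix V V ℝ) * mc (↑U⁻¹ : Matrix V V ℝ) = 1 := by
    rw [← _root_.map_mul, Units.mul_inv, _root_.map_one]
  have hscal : ∀ M : Matrix V V ℝ[X], Matrix.scalar V (X : ℝ[X]) * M = M * Matrix.scalar V (X : ℝ[X]) :=
    fun M => (Matrix.scalar_commute (X : ℝ[X]) (fun r' => mul_comm _ _) M).eq
  have hcm : ((U : Matrix V V ℝ) * A * (↑U⁻¹ : Matrix V V ℝ)).charmatrix
      = mc (U : Matrix V V ℝ) * A.charmatrix * mc (↑U⁻¹ : Matrix V V ℝ) := by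
    show Matrix.scalar V (X : ℝ[X]) - mc ((U : Matrix V V ℝ) * A * (↑U⁻¹ : Matrix V V ℝ)) = _
    have h1 : A.charmatrix = Matrix.scalar V (X : ℝ[X]) - mc A := rfl
    rw [h1, _root_.map_mul, _root_.map_mul, Matrix.mul_sub, Matrix.sub_mul]
    congr 1
    rw [Matrix.mul_assoc, hscal, ← Matrix.mul_assoc, hone, Matrix.one_mul]
  unfold Matrix.charpoly
  rw [hcm, Matrix.det_mul, Matrix.det_mul]
  have : (mc (U : Matrix V V ℝ)).det * (mc (↑U⁻¹ : Matrix V V ℝ)).det = 1 := by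
    rw [← Matrix.det_mul, hone, Matrix.det_one]
  calc (mc (U : Matrix V V ℝ)).det * A.charmatrix.det * (mc (↑U⁻¹ : Matrix V V ℝ)).det
      = A.charmatrix.det * ((mc (U : Matrix V V ℝ)).det * (mc (↑U⁻¹ : Matrix V V ℝ)).det) := by ring
    _ = A.charmatrix.det := by rw [this, mul_one]

lemma charpoly_diagonal (d : V → ℝ) :
    (Matrix.diagonal d).charpoly = ∏ i, (X - C (d i)) := by
  unfold Matrix.charpoly
  have h : (Matrix.diagonal d).charmatrix = Matrix.diagonal (fun i => X - C (d i)) := by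
    apply Matrix.ext
    intro i j
    by_cases h : i = j
    · subst h; rw [Matrix.charmatrix_apply_eq, Matrix.diagonal_apply_eq, Matrix.diagonal_apply_eq]
    · simp [Matrix.charmatrix_apply_ne _ _ _ h, Matrix.diagonal_apply_ne _ h]
  rw [h, Matrix.det_diagonal]

lemma diag_ofReal (lam : V → ℝ) :
    Matrix.diagonal ((RCLike.ofReal : ℝ → ℝ) ∘ lam) = Matrix.diagonal lam := by
  rw [RCLike.ofReal_real_eq_id, Function.id_comp]

lemma roots_charpoly_hermitian {A : Matrix V V ℝ} (hA : A.IsHermitian) :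
    A.charpoly.roots = Finset.univ.val.map hA.eigenvalues := by
  have hU := hA.eigenvectorUnitary.2
  rw [Unitary.mem_iff] at hU
  set U : Matrix V V ℝ := (hA.eigenvectorUnitary : Matrix V V ℝ) with hUdef
  set Uu : (Matrix V V ℝ)ˣ := ⟨U, star U, hU.2, hU.1⟩ with hUu
  have hAeq : A = (Uu : Matrix V V ℝ) * Matrix.diagonal hA.eigenvalues * (↑Uu⁻¹ : Matrix V V ℝ) := by
    have := hA.spectral_theorem
    rw [diag_ofReal] at this
    exact this
  conv_lhs => rw [hAeq]
  rw [charpoly_conj, _root_.charpoly_diagonal]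
  have h2 : ∏ i, (X - C (hA.eigenvalues i))
      = ((Finset.univ.val.map hA.eigenvalues).map (fun a => X - C a)).prod := by
    rw [Multiset.map_map]
    rfl
  rw [h2, Polynomial.roots_multiset_prod_X_sub_C]

lemma trace_eq_sum_eigenvalues {A : Matrix V V ℝ} (hA : A.IsHermitian) :
    A.trace = ∑ i, hA.eigenvalues i := by
  have hU := hA.eigenvectorUnitary.2
  rw [Unitary.mem_iff] at hU
  set U : Matrix V V ℝ := (hA.eigenvectorUnitary : Matrix V V ℝ) with hUdef
  conv_lhs => rw [hA.spectral_theorem]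
  rw [Unitary.conjStarAlgAut_apply, diag_ofReal, Matrix.trace_mul_comm, ← Matrix.mul_assoc, hU.1, Matrix.one_mul,
    Matrix.trace_diagonal]

lemma trace_conj_le_msSum {ι : Type*} [Fintype ι] [DecidableEq ι] {A : Matrix V V ℝ} (hA : A.IsHermitian)
    (W : Matrix V ι ℝ) (hW : Wᴴ * W = 1) (hk1 : 1 ≤ Fintype.card ι)
    (hk : Fintype.card ι ≤ Fintype.card V) :
    (Wᴴ * A * W).trace ≤ msSum (Finset.univ.val.map hA.eigenvalues) (Fintype.card ι) := by
  classical
  have hU := hA.eigenvectorUnitary.2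
  rw [Unitary.mem_iff] at hU
  set U : Matrix V V ℝ := (hA.eigenvectorUnitary : Matrix V V ℝ) with hUdef
  have hUs : U * Uᴴ = 1 := by rw [← Matrix.star_eq_conjTranspose]; exact hU.2
  have hsU : Uᴴ * U = 1 := by rw [← Matrix.star_eq_conjTranspose]; exact hU.1
  set lam := hA.eigenvalues with hlam
  set Y : Matrix V ι ℝ := Uᴴ * W with hY
  have hYY : Yᴴ * Y = 1 := by
    rw [hY, Matrix.conjTranspose_mul, Matrix.conjTranspose_conjTranspose,
      Matrix.mul_assoc, ← Matrix.mul_assoc U, hUs, Matrix.one_mul, hW]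
  set P : Matrix V V ℝ := Y * Yᴴ with hPdef
  set d : V → ℝ := fun j => P j j with hd
  have hPsymm : ∀ i j, P i j = P j i := by
    intro i j
    have h1 : Pᴴ = P := by
      rw [hPdef, Matrix.conjTranspose_mul, Matrix.conjTranspose_conjTranspose]
    conv_lhs => rw [← h1]
    simp [Matrix.conjTranspose_apply]
  have hd0 : ∀ j, 0 ≤ d j := by
    intro j
    rw [hd]
    simp only [hPdef, Matrix.mul_apply, Matrix.conjTranspose_apply, star_trivial]
    exact Finset.sum_nonneg fun i _ => mul_self_nonneg _
  have hPP : P * P = P := by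
    rw [hPdef, Matrix.mul_assoc, ← Matrix.mul_assoc Yᴴ, hYY, Matrix.one_mul]
  have hd1 : ∀ j, d j ≤ 1 := by
    intro j
    have h1 : d j = ∑ i, P j i * P j i := by
      have h0 : d j = (P * P) j j := by rw [hPP]
      rw [h0, Matrix.mul_apply]
      exact Finset.sum_congr rfl fun i _ => by rw [hPsymm i j]
    have h2 : P j j * P j j ≤ ∑ i, P j i * P j i := by
      apply Finset.single_le_sum (f := fun i => P j i * P j i) (fun i _ => mul_self_nonneg _)
        (Finset.mem_univ j)
    nlinarith [hd0 j, h1, h2]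
  have hdsum : ∑ j, d j = (Fintype.card ι : ℝ) := by
    have h1 : ∑ j, d j = P.trace := rfl
    rw [h1, hPdef, Matrix.trace_mul_comm, hYY, Matrix.trace_one]
  have htr : (Wᴴ * A * W).trace = ∑ j, d j * lam j := by
    have hAeq : A = U * Matrix.diagonal lam * Uᴴ := by
      have := hA.spectral_theorem
      rw [diag_ofReal] at this
      rw [this, Unitary.conjStarAlgAut_apply, Matrix.star_eq_conjTranspose]
    have h1 : Wᴴ * A * W = Yᴴ * (Matrix.diagonal lam * Y) := by
      rw [hAeq, hY, Matrix.conjTranspose_mul, Matrix.conjTranspose_conjTranspose]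
      rw [Matrix.mul_assoc, Matrix.mul_assoc, Matrix.mul_assoc, Matrix.mul_assoc]
    rw [h1, Matrix.trace_mul_comm, Matrix.mul_assoc]
    rw [Matrix.trace]
    apply Finset.sum_congr rfl
    intro j _
    rw [Matrix.diag_apply, Matrix.diagonal_mul]
    exact mul_comm _ _
  rw [htr]
  exact weighted_le_msSum lam d (Fintype.card ι) hk1 hk hd0 hd1 (by rw [hdsum])

end Spectral
section Fan

open Matrix Polynomial

variable {V : Type*} [Fintype V] [DecidableEq V]

lemma submatrix_one_inj {ι : Type*} [Fintype ι] [DecidableEq ι] (f : ι → V)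
    (hf : Function.Injective f) :
    (1 : Matrix V V ℝ).submatrix f f = (1 : Matrix ι ι ℝ) := by
  apply Matrix.ext
  intro i j
  simp [Matrix.submatrix_apply, Matrix.one_apply, hf.eq_iff]

lemma fan_ineq {A B : Matrix V V ℝ} (hA : A.IsHermitian) (hB : B.IsHermitian)
    (hAB : (A + B).IsHermitian) (k : ℕ) (hk1 : 1 ≤ k) (hk : k ≤ Fintype.card V) :
    msSum (Finset.univ.val.map hAB.eigenvalues) k ≤
      msSum (Finset.univ.val.map hA.eigenvalues) k +
      msSum (Finset.univ.val.map hB.eigenvalues) k := by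
  classical
  obtain ⟨u, hu, hucard, husum⟩ := msSum_exists (Finset.univ.val.map hAB.eigenvalues) k
    (by simpa using hk)
  obtain ⟨t, ht, rfl⟩ := exists_of_le_map _ _ _ hu
  have htn : t.Nodup := Multiset.nodup_of_le ht Finset.univ.nodup
  set S : Finset V := ⟨t, htn⟩ with hS
  have hScard : S.card = k := by simpa [hS] using hucard
  have hcardι : Fintype.card {x // x ∈ S} = k := by rw [Fintype.card_coe, hScard]
  set v : {x // x ∈ S} → V := Subtype.val with hv
  have hvinj : Function.Injective v := Subtype.val_injective
  have hU := hAB.eigenvectorUnitary.2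
  rw [Unitary.mem_iff] at hU
  set U : Matrix V V ℝ := (hAB.eigenvectorUnitary : Matrix V V ℝ) with hUdef
  have hsU : Uᴴ * U = 1 := by rw [← Matrix.star_eq_conjTranspose]; exact hU.1
  set W : Matrix V {x // x ∈ S} ℝ := U.submatrix id v with hWdef
  have hWct : Wᴴ = Uᴴ.submatrix v id := by
    rw [hWdef, Matrix.conjTranspose_submatrix]
  have hWW : Wᴴ * W = 1 := by
    rw [hWct, hWdef, ← Matrix.submatrix_mul _ _ v id v Function.bijective_id, hsU,
      submatrix_one_inj v hvinj]
  -- trace of compression of A+B equals the chosen eigenvalue sum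
  have hdiagc : Wᴴ * (A + B) * W
      = (Matrix.diagonal hAB.eigenvalues).submatrix v v := by
    rw [hWct, hWdef]
    conv_lhs => rw [show (A + B) = (A + B).submatrix id id from (Matrix.submatrix_id_id _).symm]
    rw [← Matrix.submatrix_mul Uᴴ (A + B) v id id Function.bijective_id]
    rw [← Matrix.submatrix_mul _ U v id v Function.bijective_id]
    have hsd := hAB.conjStarAlgAut_star_eigenvectorUnitary
    simp only [Unitary.conjStarAlgAut_apply, Unitary.coe_star, star_star] at hsd
    rw [Matrix.star_eq_conjTranspose] at hsd
    rw [hsd, diag_ofReal]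
  have htrace : (Wᴴ * (A + B) * W).trace = (Multiset.map hAB.eigenvalues t).sum := by
    rw [hdiagc, Matrix.trace]
    have h1 : ∀ j : {x // x ∈ S}, ((Matrix.diagonal hAB.eigenvalues).submatrix v v).diag j
        = hAB.eigenvalues (v j) := by
      intro j
      simp [Matrix.diag_apply, Matrix.submatrix_apply, Matrix.diagonal_apply_eq]
    rw [Finset.sum_congr rfl fun j _ => h1 j]
    have h2 : ∑ j : {x // x ∈ S}, hAB.eigenvalues (v j) = ∑ x ∈ S, hAB.eigenvalues x :=
      Finset.sum_coe_sort S hAB.eigenvalues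
    rw [h2]
    rfl
  have hsplit : Wᴴ * (A + B) * W = Wᴴ * A * W + Wᴴ * B * W := by
    rw [Matrix.mul_add, Matrix.add_mul]
  have hkey : msSum (Multiset.map hAB.eigenvalues Finset.univ.val) k
      = (Wᴴ * A * W).trace + (Wᴴ * B * W).trace := by
    rw [← Matrix.trace_add, ← hsplit, htrace, husum]
  rw [hkey]
  have h1 := trace_conj_le_msSum hA W hWW (by omega) (by omega)
  have h2 := trace_conj_le_msSum hB W hWW (by omega) (by omega)
  rw [hcardι] at h1 h2
  exact add_le_add h1 h2

end Fan
section GraphLemmas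

open Matrix Polynomial

variable {V : Type*} [Fintype V] [DecidableEq V]

lemma signlessLap_posSemidef (G : SimpleGraph V) : (signlessLap G).PosSemidef := by
  classical
  refine Matrix.posSemidef_iff_dotProduct_mulVec.mpr ⟨signlessLap_isHermitian G, fun x => ?_⟩
  set a : V → V → ℝ := fun i j => if G.Adj i j then 1 else 0 with ha
  have ha0 : ∀ i j, 0 ≤ a i j := by intro i j; rw [ha]; dsimp; split <;> norm_num
  have hQ : ∀ i j, signlessLap G i j = (if i = j then (G.degree i : ℝ) else 0) + a i j := by
    intro i j
    by_cases h : i = j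
    · subst h
      simp [signlessLap, SimpleGraph.degMatrix, Matrix.diagonal_apply_eq, ha, Matrix.add_apply]
    · simp [signlessLap, SimpleGraph.degMatrix, Matrix.diagonal_apply, h, ha, Matrix.add_apply]
  have hsymm : ∀ i j, a i j = a j i := by
    intro i j; rw [ha]; dsimp; rw [SimpleGraph.adj_comm]
  have hrow : ∀ i, ∑ j, a i j = (G.degree i : ℝ) := by
    intro i
    rw [ha]
    dsimp
    rw [Finset.sum_boole]
    congr 1
    simp [SimpleGraph.neighborFinset_eq_filter, SimpleGraph.degree]
  set S : ℝ := ∑ i, (G.degree i : ℝ) * (x i * x i) with hS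
  set T : ℝ := ∑ i, ∑ j, a i j * (x i * x j) with hT
  have hvec : ∀ i, (signlessLap G *ᵥ x) i = (G.degree i : ℝ) * x i + ∑ j, a i j * x j := by
    intro i
    rw [Matrix.mulVec, dotProduct]
    rw [Finset.sum_congr rfl fun j _ => by rw [hQ i j, add_mul]]
    rw [Finset.sum_add_distrib]
    congr 1
    have h2 : ∀ j, (if i = j then (G.degree i : ℝ) else 0) * x j
        = if i = j then (G.degree i : ℝ) * x j else 0 := fun j => by split <;> simp
    rw [Finset.sum_congr rfl fun j _ => h2 j, Finset.sum_ite_eq]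
    simp
  have hLHS : dotProduct (star x) (signlessLap G *ᵥ x) = S + T := by
    rw [dotProduct]
    rw [Finset.sum_congr rfl fun i _ => by
      rw [Pi.star_apply, star_trivial, hvec i, mul_add, Finset.mul_sum]]
    rw [Finset.sum_add_distrib, hS, hT]
    congr 1
    · exact Finset.sum_congr rfl fun i _ => by ring
    · exact Finset.sum_congr rfl fun i _ => Finset.sum_congr rfl fun j _ => by ring
  have h1 : ∑ i, ∑ j, a i j * (x i * x i) = S := by
    rw [hS]
    apply Finset.sum_congr rfl
    intro i _
    rw [← Finset.sum_mul, hrow]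
  have h2 : ∑ i, ∑ j, a i j * (x j * x j) = S := by
    rw [Finset.sum_comm, hS]
    apply Finset.sum_congr rfl
    intro j _
    rw [Finset.sum_congr rfl fun i _ => by rw [hsymm i j], ← Finset.sum_mul, hrow]
  have hkey : ∑ i, ∑ j, a i j * (x i + x j)^2 = 2 * (S + T) := by
    have hexp : ∀ i j, a i j * (x i + x j)^2
        = a i j * (x i * x i) + 2 * (a i j * (x i * x j)) + a i j * (x j * x j) := by
      intro i j; ring
    rw [Finset.sum_congr rfl fun i _ => Finset.sum_congr rfl fun j _ => hexp i j]
    rw [Finset.sum_congr rfl fun i _ => Finset.sum_add_distrib]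
    rw [Finset.sum_add_distrib]
    rw [Finset.sum_congr rfl fun i _ => Finset.sum_add_distrib]
    rw [Finset.sum_add_distrib]
    rw [h1, h2]
    have h3 : ∑ i, ∑ j, 2 * (a i j * (x i * x j)) = 2 * T := by
      rw [hT, Finset.mul_sum]
      apply Finset.sum_congr rfl
      intro i _
      rw [Finset.mul_sum]
    rw [h3]
    ring
  have hpos : 0 ≤ ∑ i, ∑ j, a i j * (x i + x j)^2 :=
    Finset.sum_nonneg fun i _ => Finset.sum_nonneg fun j _ =>
      mul_nonneg (ha0 i j) (sq_nonneg _)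
  rw [hLHS]
  rw [hkey] at hpos
  linarith

lemma trace_signlessLap (G : SimpleGraph V) :
    (signlessLap G).trace = 2 * (numEdges G : ℝ) := by
  classical
  have h1 : (signlessLap G).trace = ∑ i, (G.degree i : ℝ) := by
    rw [Matrix.trace]
    apply Finset.sum_congr rfl
    intro i _
    rw [Matrix.diag_apply]
    simp [signlessLap, SimpleGraph.degMatrix, Matrix.add_apply, Matrix.diagonal_apply_eq]
  rw [h1]
  have h2 : ∑ i, (G.degree i : ℝ) = ((∑ i, G.degree i : ℕ) : ℝ) := by
    rw [Nat.cast_sum]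
  rw [h2, SimpleGraph.sum_degrees_eq_twice_card_edges]
  have h3 : numEdges G = G.edgeFinset.card := by
    rw [numEdges, SimpleGraph.edgeFinset, Set.ncard_eq_toFinset_card']
  rw [h3]
  push_cast
  ring

end GraphLemmas
section Connect

open Matrix Polynomial

variable {V₁ V₂ : Type*} [DecidableEq V₁] [DecidableEq V₂]

lemma connect_adj_inl_inl (G₁ : SimpleGraph V₁) (G₂ : SimpleGraph V₂) (u₁ u₂ : V₁) (v₁ v₂ : V₂)
    (a b : V₁) : (connect2Graphs G₁ G₂ u₁ u₂ v₁ v₂).Adj (Sum.inl a) (Sum.inl b) ↔ G₁.Adj a b :=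
  Iff.rfl

lemma connect_adj_inr_inr (G₁ : SimpleGraph V₁) (G₂ : SimpleGraph V₂) (u₁ u₂ : V₁) (v₁ v₂ : V₂)
    (a b : V₂) : (connect2Graphs G₁ G₂ u₁ u₂ v₁ v₂).Adj (Sum.inr a) (Sum.inr b) ↔ G₂.Adj a b :=
  Iff.rfl

lemma connect_adj_inl_inr (G₁ : SimpleGraph V₁) (G₂ : SimpleGraph V₂) (u₁ u₂ : V₁) (v₁ v₂ : V₂)
    (a : V₁) (b : V₂) : (connect2Graphs G₁ G₂ u₁ u₂ v₁ v₂).Adj (Sum.inl a) (Sum.inr b)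
      ↔ ((a = u₁ ∧ b = v₁) ∨ (a = u₂ ∧ b = v₂)) := Iff.rfl

lemma connect_adj_inr_inl (G₁ : SimpleGraph V₁) (G₂ : SimpleGraph V₂) (u₁ u₂ : V₁) (v₁ v₂ : V₂)
    (a : V₁) (b : V₂) : (connect2Graphs G₁ G₂ u₁ u₂ v₁ v₂).Adj (Sum.inr b) (Sum.inl a)
      ↔ ((a = u₁ ∧ b = v₁) ∨ (a = u₂ ∧ b = v₂)) := Iff.rfl

open Classical in
lemma degree_eq_sum_ind {V : Type*} [Fintype V] [DecidableEq V] (G : SimpleGraph V) (i : V) :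
    (G.degree i : ℝ) = ∑ j, if G.Adj i j then (1:ℝ) else 0 := by
  classical
  rw [Finset.sum_boole]
  congr 1
  simp [SimpleGraph.neighborFinset_eq_filter, SimpleGraph.degree]

open Classical in
lemma signlessLap_apply {V : Type*} [Fintype V] [DecidableEq V] (G : SimpleGraph V) (i j : V) :
    signlessLap G i j = (if i = j then (G.degree i : ℝ) else 0)
      + (if G.Adj i j then 1 else 0) := by
  classical
  by_cases h : i = j
  · subst h
    simp [signlessLap, SimpleGraph.degMatrix, Matrix.diagonal_apply_eq, Matrix.add_apply]
  · simp [signlessLap, SimpleGraph.degMatrix, Matrix.diagonal_apply, h, Matrix.add_apply]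

variable [Fintype V₁] [Fintype V₂]

open Classical in
lemma degree_connect_inl (G₁ : SimpleGraph V₁) (G₂ : SimpleGraph V₂) (u₁ u₂ : V₁) (v₁ v₂ : V₂)
    (a : V₁) :
    ((connect2Graphs G₁ G₂ u₁ u₂ v₁ v₂).degree (Sum.inl a) : ℝ)
      = (G₁.degree a : ℝ)
        + ((connect2Graphs (⊥ : SimpleGraph V₁) (⊥ : SimpleGraph V₂) u₁ u₂ v₁ v₂).degree
            (Sum.inl a) : ℝ) := by
  classical
  rw [degree_eq_sum_ind, degree_eq_sum_ind, degree_eq_sum_ind,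
    Fintype.sum_sum_type, Fintype.sum_sum_type]
  have h1 : ∀ b : V₁, (if (connect2Graphs G₁ G₂ u₁ u₂ v₁ v₂).Adj (Sum.inl a) (Sum.inl b)
      then (1:ℝ) else 0) = if G₁.Adj a b then (1:ℝ) else 0 := by
    intro b; simp only [connect_adj_inl_inl]
  have h2 : ∀ b : V₂, (if (connect2Graphs G₁ G₂ u₁ u₂ v₁ v₂).Adj (Sum.inl a) (Sum.inr b)
      then (1:ℝ) else 0)
      = if (connect2Graphs (⊥ : SimpleGraph V₁) (⊥ : SimpleGraph V₂) u₁ u₂ v₁ v₂).Adj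
          (Sum.inl a) (Sum.inr b) then (1:ℝ) else 0 := by
    intro b; simp only [connect_adj_inl_inr]
  have h3 : ∀ b : V₁, (if (connect2Graphs (⊥ : SimpleGraph V₁) (⊥ : SimpleGraph V₂) u₁ u₂ v₁ v₂).Adj
      (Sum.inl a) (Sum.inl b) then (1:ℝ) else 0) = 0 := by
    intro b; simp only [connect_adj_inl_inl]; simp
  rw [Finset.sum_congr rfl fun b _ => h1 b, Finset.sum_congr rfl fun b _ => h2 b]
  rw [Finset.sum_congr rfl fun b _ => h3 b]
  simp [add_comm]

open Classical in
lemma degree_connect_inr (G₁ : SimpleGraph V₁) (G₂ : SimpleGraph V₂) (u₁ u₂ : V₁) (v₁ v₂ : V₂)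
    (b : V₂) :
    ((connect2Graphs G₁ G₂ u₁ u₂ v₁ v₂).degree (Sum.inr b) : ℝ)
      = (G₂.degree b : ℝ)
        + ((connect2Graphs (⊥ : SimpleGraph V₁) (⊥ : SimpleGraph V₂) u₁ u₂ v₁ v₂).degree
            (Sum.inr b) : ℝ) := by
  classical
  rw [degree_eq_sum_ind, degree_eq_sum_ind, degree_eq_sum_ind,
    Fintype.sum_sum_type, Fintype.sum_sum_type]
  have h1 : ∀ a : V₂, (if (connect2Graphs G₁ G₂ u₁ u₂ v₁ v₂).Adj (Sum.inr b) (Sum.inr a)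
      then (1:ℝ) else 0) = if G₂.Adj b a then (1:ℝ) else 0 := by
    intro a; simp only [connect_adj_inr_inr]
  have h2 : ∀ a : V₁, (if (connect2Graphs G₁ G₂ u₁ u₂ v₁ v₂).Adj (Sum.inr b) (Sum.inl a)
      then (1:ℝ) else 0)
      = if (connect2Graphs (⊥ : SimpleGraph V₁) (⊥ : SimpleGraph V₂) u₁ u₂ v₁ v₂).Adj
          (Sum.inr b) (Sum.inl a) then (1:ℝ) else 0 := by
    intro a; simp only [connect_adj_inr_inl]
  have h3 : ∀ a : V₂, (if (connect2Graphs (⊥ : SimpleGraph V₁) (⊥ : SimpleGraph V₂) u₁ u₂ v₁ v₂).Adj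
      (Sum.inr b) (Sum.inr a) then (1:ℝ) else 0) = 0 := by
    intro a; simp only [connect_adj_inr_inr]; simp
  rw [Finset.sum_congr rfl fun a _ => h1 a, Finset.sum_congr rfl fun a _ => h2 a]
  rw [Finset.sum_congr rfl fun a _ => h3 a]
  simp [add_comm]

open Classical in
lemma signlessLap_connect_decomp (G₁ : SimpleGraph V₁) (G₂ : SimpleGraph V₂)
    (u₁ u₂ : V₁) (v₁ v₂ : V₂) :
    signlessLap (connect2Graphs G₁ G₂ u₁ u₂ v₁ v₂)
      = Matrix.fromBlocks (signlessLap G₁) 0 0 (signlessLap G₂)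
        + signlessLap (connect2Graphs (⊥ : SimpleGraph V₁) (⊥ : SimpleGraph V₂) u₁ u₂ v₁ v₂) := by
  classical
  apply Matrix.ext
  intro x y
  rw [Matrix.add_apply, signlessLap_apply, signlessLap_apply]
  cases x with
  | inl a =>
    cases y with
    | inl b =>
      rw [Matrix.fromBlocks_apply₁₁, signlessLap_apply]
      by_cases hab : a = b
      · subst hab
        have hd := degree_connect_inl G₁ G₂ u₁ u₂ v₁ v₂ a
        have ha1 : ¬ (connect2Graphs G₁ G₂ u₁ u₂ v₁ v₂).Adj (Sum.inl a) (Sum.inl a) :=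
          SimpleGraph.irrefl _
        have ha2 : ¬ G₁.Adj a a := G₁.irrefl
        have ha3 : ¬ (connect2Graphs (⊥ : SimpleGraph V₁) (⊥ : SimpleGraph V₂)
            u₁ u₂ v₁ v₂).Adj (Sum.inl a) (Sum.inl a) := SimpleGraph.irrefl _
        rw [hd]
        simp [ha1, ha2, ha3]
      · have hne : (Sum.inl a : V₁ ⊕ V₂) ≠ Sum.inl b := fun h => hab (Sum.inl_injective h)
        rw [if_neg hne, if_neg hab, if_neg hne]
        simp only [connect_adj_inl_inl]
        simp
    | inr b =>
      have hne : (Sum.inl a : V₁ ⊕ V₂) ≠ Sum.inr b := Sum.inl_ne_inr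
      rw [Matrix.fromBlocks_apply₁₂, if_neg hne, if_neg hne]
      simp only [connect_adj_inl_inr, Matrix.zero_apply]
      simp
  | inr a =>
    cases y with
    | inl b =>
      have hne : (Sum.inr a : V₁ ⊕ V₂) ≠ Sum.inl b := Sum.inr_ne_inl
      rw [Matrix.fromBlocks_apply₂₁, if_neg hne, if_neg hne]
      simp only [connect_adj_inr_inl, Matrix.zero_apply]
      simp
    | inr b =>
      rw [Matrix.fromBlocks_apply₂₂, signlessLap_apply]
      by_cases hab : a = b
      · subst hab
        have hd := degree_connect_inr G₁ G₂ u₁ u₂ v₁ v₂ a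
        have ha1 : ¬ (connect2Graphs G₁ G₂ u₁ u₂ v₁ v₂).Adj (Sum.inr a) (Sum.inr a) :=
          SimpleGraph.irrefl _
        have ha2 : ¬ G₂.Adj a a := G₂.irrefl
        have ha3 : ¬ (connect2Graphs (⊥ : SimpleGraph V₁) (⊥ : SimpleGraph V₂)
            u₁ u₂ v₁ v₂).Adj (Sum.inr a) (Sum.inr a) := SimpleGraph.irrefl _
        rw [hd]
        simp [ha1, ha2, ha3]
      · have hne : (Sum.inr a : V₁ ⊕ V₂) ≠ Sum.inr b := fun h => hab (Sum.inr_injective h)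
        rw [if_neg hne, if_neg hab, if_neg hne]
        simp only [connect_adj_inr_inr]
        simp

lemma numEdges_F (u₁ u₂ : V₁) (v₁ v₂ : V₂) (hdist : (u₁, v₁) ≠ (u₂, v₂)) :
    numEdges (connect2Graphs (⊥ : SimpleGraph V₁) (⊥ : SimpleGraph V₂) u₁ u₂ v₁ v₂) = 2 := by
  classical
  have hset : (connect2Graphs (⊥ : SimpleGraph V₁) (⊥ : SimpleGraph V₂) u₁ u₂ v₁ v₂).edgeSet
      = {s(Sum.inl u₁, Sum.inr v₁), s(Sum.inl u₂, Sum.inr v₂)} := by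
    ext e
    induction e with
    | _ x y =>
      rw [SimpleGraph.mem_edgeSet]
      cases x with
      | inl a =>
        cases y with
        | inl b => simp [connect_adj_inl_inl, Sym2.eq_iff]
        | inr b => simp [connect_adj_inl_inr, Sym2.eq_iff]
      | inr a =>
        cases y with
        | inl b => simp [connect_adj_inr_inl, Sym2.eq_iff, and_comm]
        | inr b => simp [connect_adj_inr_inr, Sym2.eq_iff]
  rw [numEdges, hset]
  apply Set.ncard_pair
  intro h
  rw [Sym2.eq_iff] at h
  rcases h with ⟨h1, h2⟩ | ⟨h1, h2⟩
  · exact hdist (by rw [Sum.inl.injEq] at h1; rw [Sum.inr.injEq] at h2; rw [h1, h2])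
  · exact Sum.inl_ne_inr h1

end Connect
lemma trace_fromBlocks' {α β : Type*} [Fintype α] [Fintype β]
    (A : Matrix α α ℝ) (B : Matrix α β ℝ) (C : Matrix β α ℝ) (D : Matrix β β ℝ) :
    (Matrix.fromBlocks A B C D).trace = A.trace + D.trace := by
  rw [Matrix.trace, Matrix.trace, Matrix.trace, Fintype.sum_sum_type]
  simp [Matrix.diag_apply]

lemma msSum_zero (s : Multiset ℝ) : msSum s 0 = 0 := rfl

/-- If `G₁, G₂` each have at least two edges, satisfy `S⁺_{kᵢ}(Gᵢ) ≤ e(Gᵢ) + kᵢ(kᵢ+1)/2`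
for all `1 ≤ kᵢ ≤ nᵢ`, and the conjecture holds for `k = 1, 2` for every graph, then
`G₁ ≈ G₂` satisfies `S⁺_k ≤ e + k(k+1)/2` for all `1 ≤ k ≤ n₁ + n₂`. -/
theorem splus_le_connect2Graphs {n₁ n₂ : ℕ} (G₁ : SimpleGraph (Fin n₁))
    (G₂ : SimpleGraph (Fin n₂))
    (hne₁ : 2 ≤ numEdges G₁) (hne₂ : 2 ≤ numEdges G₂)
    (h₁ : ∀ k₁ : ℕ, 1 ≤ k₁ → k₁ ≤ n₁ → Splus G₁ k₁ ≤ (numEdges G₁ : ℝ) + k₁ * (k₁ + 1) / 2)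
    (h₂ : ∀ k₂ : ℕ, 1 ≤ k₂ → k₂ ≤ n₂ → Splus G₂ k₂ ≤ (numEdges G₂ : ℝ) + k₂ * (k₂ + 1) / 2)
    (hsmall : ∀ (W : Type) [Fintype W] [DecidableEq W] (H : SimpleGraph W), ∀ k ∈ ({1, 2} : Set ℕ),
      Splus H k ≤ (numEdges H : ℝ) + k * (k + 1) / 2)
    (u₁ u₂ : Fin n₁) (v₁ v₂ : Fin n₂) (hdist : (u₁, v₁) ≠ (u₂, v₂))
    (k : ℕ) (hk1 : 1 ≤ k) (hkn : k ≤ n₁ + n₂) :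
    Splus (connect2Graphs G₁ G₂ u₁ u₂ v₁ v₂) k ≤
      (numEdges (connect2Graphs G₁ G₂ u₁ u₂ v₁ v₂) : ℝ) + k * (k + 1) / 2 := by
  classical
  rcases le_or_gt k 2 with hk2 | hk2
  · have hk12 : k = 1 ∨ k = 2 := by omega
    rcases hk12 with rfl | rfl
    · exact hsmall _ _ 1 (by simp)
    · exact hsmall _ _ 2 (by simp)
  -- now 3 ≤ k
  set Gc := connect2Graphs G₁ G₂ u₁ u₂ v₁ v₂ with hGcdef
  set F := connect2Graphs (⊥ : SimpleGraph (Fin n₁)) (⊥ : SimpleGraph (Fin n₂)) u₁ u₂ v₁ v₂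
    with hFdef
  set Mb := Matrix.fromBlocks (signlessLap G₁) 0 0 (signlessLap G₂) with hMbdef
  have hQ1 := signlessLap_isHermitian G₁
  have hQ2 := signlessLap_isHermitian G₂
  have hFh := signlessLap_isHermitian F
  have hdecomp : signlessLap Gc = Mb + signlessLap F :=
    signlessLap_connect_decomp G₁ G₂ u₁ u₂ v₁ v₂
  have hMbh : Mb.IsHermitian := by
    show Mbᴴ = Mb
    rw [hMbdef, Matrix.fromBlocks_conjTranspose, hQ1, hQ2]
    simp
  have hABh : (Mb + signlessLap F).IsHermitian := hdecomp ▸ signlessLap_isHermitian Gc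
  have hcardV : Fintype.card (Fin n₁ ⊕ Fin n₂) = n₁ + n₂ := by simp
  set s : Multiset ℝ := Finset.univ.val.map hQ1.eigenvalues with hsdef
  set t : Multiset ℝ := Finset.univ.val.map hQ2.eigenvalues with htdef
  have hmc : Finset.univ.val.map (signlessLap_isHermitian Gc).eigenvalues
      = Finset.univ.val.map hABh.eigenvalues := by
    rw [← roots_charpoly_hermitian, ← roots_charpoly_hermitian, hdecomp]
  have hmb : Finset.univ.val.map hMbh.eigenvalues = s + t := by
    rw [hsdef, htdef, ← roots_charpoly_hermitian, ← roots_charpoly_hermitian,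
      ← roots_charpoly_hermitian, hMbdef, Matrix.charpoly_fromBlocks_zero₁₂,
      Polynomial.roots_mul
        (mul_ne_zero (Matrix.charpoly_monic _).ne_zero (Matrix.charpoly_monic _).ne_zero)]
  -- edge counts
  have htrF : (signlessLap F).trace = 2 * (numEdges F : ℝ) := trace_signlessLap F
  have hnF : numEdges F = 2 := numEdges_F u₁ u₂ v₁ v₂ hdist
  have htrMb : Mb.trace = 2 * (numEdges G₁ : ℝ) + 2 * (numEdges G₂ : ℝ) := by
    rw [hMbdef, trace_fromBlocks', trace_signlessLap, trace_signlessLap]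
  have hnGc : (numEdges Gc : ℝ) = (numEdges G₁ : ℝ) + (numEdges G₂ : ℝ) + 2 := by
    have h0 := trace_signlessLap Gc
    rw [hdecomp, Matrix.trace_add, htrMb, htrF, hnF] at h0
    push_cast at h0 ⊢
    linarith
  -- fan inequality
  have hSplus : Splus Gc k = msSum (Finset.univ.val.map hABh.eigenvalues) k := by
    show msSum (Finset.univ.val.map (signlessLap_isHermitian Gc).eigenvalues) k = _
    rw [hmc]
  have hfan := fan_ineq hMbh hFh hABh k (by omega) (by rw [hcardV]; omega)
  -- bound for F
  have hFbound : msSum (Finset.univ.val.map hFh.eigenvalues) k ≤ 4 := by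
    have hnn : ∀ x ∈ Finset.univ.val.map hFh.eigenvalues, 0 ≤ x := by
      intro x hx
      obtain ⟨i, _, rfl⟩ := Multiset.mem_map.mp hx
      exact (signlessLap_posSemidef F).eigenvalues_nonneg i
    have hsum4 : (Finset.univ.val.map hFh.eigenvalues).sum = 4 := by
      have h1 : (Finset.univ.val.map hFh.eigenvalues).sum = ∑ i, hFh.eigenvalues i := rfl
      rw [h1, ← trace_eq_sum_eigenvalues hFh, htrF, hnF]
      norm_num
    calc msSum (Finset.univ.val.map hFh.eigenvalues) k
        ≤ (Finset.univ.val.map hFh.eigenvalues).sum := msSum_le_sum _ hnn k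
      _ = 4 := hsum4
  -- split for Mb
  have hcards : Multiset.card s = n₁ := by rw [hsdef]; simp
  have hcardt : Multiset.card t = n₂ := by rw [htdef]; simp
  obtain ⟨k₁, k₂, hk12, hk1n, hk2n, hsplit⟩ :=
    msSum_add_split s t k (by rw [hcards, hcardt]; omega)
  rw [← hmb] at hsplit
  rw [hcards] at hk1n
  rw [hcardt] at hk2n
  -- identify Splus values
  have hid1 : ∀ m, msSum s m = Splus G₁ m := fun m => rfl
  have hid2 : ∀ m, msSum t m = Splus G₂ m := fun m => rfl
  have he1 : (2:ℝ) ≤ (numEdges G₁ : ℝ) := by exact_mod_cast hne₁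
  have he2 : (2:ℝ) ≤ (numEdges G₂ : ℝ) := by exact_mod_cast hne₂
  have hmain : msSum s k₁ + msSum t k₂ + 4 ≤ (numEdges Gc : ℝ) + k * (k + 1) / 2 := by
    rcases Nat.eq_zero_or_pos k₁ with hk10 | hk1p
    · subst hk10
      have hk2k : k₂ = k := by omega
      subst hk2k
      have hb2 := h₂ k₂ (by omega) hk2n
      rw [msSum_zero, hid2]
      rw [hnGc]
      linarith
    · rcases Nat.eq_zero_or_pos k₂ with hk20 | hk2p
      · subst hk20
        have hk1k : k₁ = k := by omega
        subst hk1k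
        have hb1 := h₁ k₁ (by omega) hk1n
        rw [msSum_zero, hid1]
        rw [hnGc]
        linarith
      · have hb1 := h₁ k₁ hk1p hk1n
        have hb2 := h₂ k₂ hk2p hk2n
        rw [hid1, hid2, hnGc]
        have hprod : 2 ≤ k₁ * k₂ := by
          rcases Nat.lt_or_ge k₁ 2 with h | h
          · have hk11 : k₁ = 1 := by omega
            subst hk11
            omega
          · calc 2 ≤ 2 * k₂ := by omega
              _ ≤ k₁ * k₂ := Nat.mul_le_mul_right _ h
        have hprodR : (2:ℝ) ≤ (k₁ : ℝ) * (k₂ : ℝ) := by exact_mod_cast hprod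
        have hkR : (k : ℝ) = (k₁ : ℝ) + (k₂ : ℝ) := by exact_mod_cast hk12.symm
        rw [hkR]
        nlinarith [hb1, hb2]
  calc Splus Gc k = msSum (Finset.univ.val.map hABh.eigenvalues) k := hSplus
    _ ≤ msSum (Finset.univ.val.map hMbh.eigenvalues) k
        + msSum (Finset.univ.val.map hFh.eigenvalues) k := hfan
    _ ≤ (msSum s k₁ + msSum t k₂) + 4 := add_le_add hsplit hFbound
    _ ≤ (numEdges Gc : ℝ) + k * (k + 1) / 2 := by linarith [hmain]
end

section
/- Let U¹_n(a,b) be the graph obtained by attaching a and b pendant vertices to two vertices of a triangle, where a + b = n − 3, a ≥ b ≥ 0, a ≥ 2, and n ≥ 5. Then the third largest signless Laplacian eigenvalue of U¹_n(a,b) is strictly less than 2. -/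
open Matrix Polynomial

/-- The `i`-th largest signless Laplacian eigenvalue of `G` (`1`-indexed). -/
noncomputable def qEig {V : Type*} [Fintype V] [DecidableEq V]
    (G : SimpleGraph V) (i : ℕ) : ℝ :=
  ((Finset.univ.val.map (signlessLap_isHermitian G).eigenvalues).toList.mergeSort
      (fun a b => decide (b ≤ a))).getD (i - 1) 0

/-- `U¹_n(a,b)`: a triangle with `a` pendant vertices attached to one of its vertices and
`b` pendant vertices attached to another. -/
def U1 (a b : ℕ) : SimpleGraph (Fin 3 ⊕ (Fin a ⊕ Fin b)) where
  Adj x y := match x, y with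
    | .inl i, .inl j => i ≠ j
    | .inl i, .inr (.inl _) => i = 0
    | .inr (.inl _), .inl i => i = 0
    | .inl i, .inr (.inr _) => i = 1
    | .inr (.inr _), .inl i => i = 1
    | _, _ => False
  symm := by
    constructor
    rintro (i | (p | p)) (j | (q | q)) h <;> first | exact h.symm | exact h | exact h.elim
  loopless := by
    constructor
    rintro (i | (p | p)) h <;> first | exact h rfl | exact h

/-! ### Auxiliary lemmas -/

lemma mulVec_sum' {V ι : Type*} [Fintype V] (s : Finset ι) (M : Matrix V V ℝ) (f : ι → V → ℝ) :
    M *ᵥ (∑ i ∈ s, f i) = ∑ i ∈ s, M *ᵥ f i := by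
  ext v
  simp [mulVec, dotProduct, Finset.sum_apply, Finset.mul_sum]
  rw [Finset.sum_comm]

lemma sum_dotProduct' {V ι : Type*} [Fintype V] (s : Finset ι) (f : ι → V → ℝ) (w : V → ℝ) :
    (∑ i ∈ s, f i) ⬝ᵥ w = ∑ i ∈ s, f i ⬝ᵥ w := by
  simp only [dotProduct, Finset.sum_apply, Finset.sum_mul]
  rw [Finset.sum_comm]

lemma dotProduct_sum' {V ι : Type*} [Fintype V] (s : Finset ι) (w : V → ℝ) (f : ι → V → ℝ) :
    w ⬝ᵥ (∑ i ∈ s, f i) = ∑ i ∈ s, w ⬝ᵥ f i := by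
  simp only [dotProduct, Finset.sum_apply, Finset.mul_sum]
  rw [Finset.sum_comm]

open Classical in
/-- If there is a subspace of codimension at most `2` on which the quadratic form of a
Hermitian matrix `M` is strictly below twice the squared norm, then at most `2` eigenvalues
of `M` are `≥ 2`. -/
lemma count_le_two {V : Type*} [Fintype V] [DecidableEq V]
    {M : Matrix V V ℝ} (hM : M.IsHermitian)
    (W : Submodule ℝ (EuclideanSpace ℝ V))
    (hW : Fintype.card V ≤ Module.finrank ℝ W + 2)
    (hneg : ∀ x : EuclideanSpace ℝ V, x ∈ W → x ≠ 0 →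
      (WithLp.equiv 2 (V → ℝ) x) ⬝ᵥ (M *ᵥ (WithLp.equiv 2 (V → ℝ) x)) <
        2 * ((WithLp.equiv 2 (V → ℝ) x) ⬝ᵥ (WithLp.equiv 2 (V → ℝ) x))) :
    (Finset.univ.filter fun i => 2 ≤ hM.eigenvalues i).card ≤ 2 := by
  by_contra hcard
  push_neg at hcard
  set T := Finset.univ.filter fun i => 2 ≤ hM.eigenvalues i with hT
  set v : T → EuclideanSpace ℝ V := fun i => hM.eigenvectorBasis i.1 with hvdef
  have hv : Orthonormal ℝ v := hM.eigenvectorBasis.orthonormal.comp _ Subtype.val_injective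
  set E := Submodule.span ℝ (Set.range v) with hE
  have hEr : Module.finrank ℝ E = T.card := by
    rw [finrank_span_eq_card hv.linearIndependent, Fintype.card_coe]
  have hnd : ¬ Disjoint E W := by
    intro hd
    have h1 := Submodule.finrank_add_finrank_le_of_disjoint hd
    rw [hEr, finrank_euclideanSpace] at h1
    omega
  rw [disjoint_iff] at hnd
  obtain ⟨x, hxmem, hx0⟩ := Submodule.exists_mem_ne_zero_of_ne_bot hnd
  obtain ⟨hxE, hxW⟩ := Submodule.mem_inf.mp hxmem
  obtain ⟨c, hc⟩ := (Submodule.mem_span_range_iff_exists_fun ℝ).1 hxE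
  set e := WithLp.linearEquiv 2 ℝ (V → ℝ) with hedef
  set v' : T → V → ℝ := fun i => e (v i) with hv'def
  have hc' : e x = ∑ i : T, c i • v' i := by
    rw [← hc, map_sum]
    simp [hv'def]
  have hdot : ∀ i j : T, v' i ⬝ᵥ v' j = if i = j then 1 else 0 := by
    intro i j
    have h2 := (orthonormal_iff_ite (𝕜 := ℝ)).mp hv i j
    rw [PiLp.inner_apply] at h2
    simpa [dotProduct, RCLike.inner_apply, conj_trivial, hv'def, hedef, mul_comm] using h2
  have hMv : ∀ i : T, M *ᵥ v' i = hM.eigenvalues i.1 • v' i := fun i =>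
    hM.mulVec_eigenvectorBasis i.1
  have h1 : M *ᵥ (e x) = ∑ i : T, (c i * hM.eigenvalues i.1) • v' i := by
    rw [hc', mulVec_sum']
    refine Finset.sum_congr rfl fun i _ => ?_
    rw [mulVec_smul, hMv i, smul_smul]
  have h2 : ∀ d : T → ℝ, (e x) ⬝ᵥ (∑ i : T, d i • v' i) = ∑ i : T, c i * d i := by
    intro d
    rw [hc', sum_dotProduct']
    refine Finset.sum_congr rfl fun i _ => ?_
    rw [smul_dotProduct, dotProduct_sum']
    simp only [dotProduct_smul, hdot, smul_eq_mul, mul_ite, mul_one, mul_zero]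
    rw [Finset.sum_ite_eq Finset.univ i d]
    simp
  have hQF : (e x) ⬝ᵥ (M *ᵥ (e x)) = ∑ i : T, c i * (c i * hM.eigenvalues i.1) := by
    rw [h1, h2]
  have hNorm : (e x) ⬝ᵥ (e x) = ∑ i : T, c i * c i := by
    have := h2 c
    rwa [← hc'] at this
  have hge : 2 * ((e x) ⬝ᵥ (e x)) ≤ (e x) ⬝ᵥ (M *ᵥ (e x)) := by
    rw [hQF, hNorm, Finset.mul_sum]
    refine Finset.sum_le_sum fun i _ => ?_
    have hev : 2 ≤ hM.eigenvalues i.1 := (Finset.mem_filter.mp i.2).2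
    nlinarith [mul_self_nonneg (c i)]
  have hlt := hneg x hxW hx0
  have hee : (WithLp.equiv 2 (V → ℝ)) x = e x := rfl
  rw [hee] at hlt
  linarith

lemma list_lemma {l : List ℝ} (hlen : 3 ≤ l.length)
    (hs : List.Pairwise (fun a b : ℝ => b ≤ a) l)
    (hcount : l.countP (fun x => decide ((2:ℝ) ≤ x)) ≤ 2) :
    l.getD 2 0 < 2 := by
  match l, hlen with
  | a :: b :: c :: rest, _ =>
    simp only [List.getD_cons_succ, List.getD_cons_zero]
    by_contra h
    push_neg at h
    simp only [List.pairwise_cons] at hs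
    have hba : c ≤ a := hs.1 c (by simp)
    have hcb : c ≤ b := hs.2.1 c (by simp)
    simp only [List.countP_cons] at hcount
    have pa : (decide ((2:ℝ) ≤ a)) = true := by simp; linarith
    have pb : (decide ((2:ℝ) ≤ b)) = true := by simp; linarith
    have pc : (decide ((2:ℝ) ≤ c)) = true := by simp; linarith
    simp [pa, pb, pc] at hcount

open Classical in
lemma signlessLap_quadForm {V : Type*} [Fintype V] [DecidableEq V] (G : SimpleGraph V)
    (x : V → ℝ) :
    x ⬝ᵥ (signlessLap G *ᵥ x) =
      ∑ v, ∑ u, (if G.Adj v u then x v * x v + x v * x u else 0) := by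
  have hdeg : ∀ v, ((G.degree v : ℝ)) = ∑ u, (if G.Adj v u then (1:ℝ) else 0) := by
    intro v
    rw [← SimpleGraph.card_neighborFinset_eq_degree, SimpleGraph.neighborFinset_eq_filter,
      Finset.card_filter]
    push_cast
    exact Finset.sum_congr rfl fun u _ => by split <;> simp
  rw [signlessLap, add_mulVec, dotProduct_add]
  have hD : x ⬝ᵥ (G.degMatrix ℝ *ᵥ x) = ∑ v, ∑ u, (if G.Adj v u then x v * x v else 0) := by
    simp only [dotProduct, SimpleGraph.degMatrix_mulVec_apply]
    refine Finset.sum_congr rfl fun v _ => ?_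
    rw [hdeg v, Finset.sum_mul, Finset.mul_sum]
    exact Finset.sum_congr rfl fun u _ => by split <;> ring
  have hA : x ⬝ᵥ (G.adjMatrix ℝ *ᵥ x) = ∑ v, ∑ u, (if G.Adj v u then x v * x u else 0) := by
    simp only [dotProduct, SimpleGraph.adjMatrix_mulVec_apply]
    refine Finset.sum_congr rfl fun v _ => ?_
    rw [SimpleGraph.neighborFinset_eq_filter, Finset.sum_filter, Finset.mul_sum]
    exact Finset.sum_congr rfl fun u _ => by split <;> ring
  rw [hD, hA, ← Finset.sum_add_distrib]
  refine Finset.sum_congr rfl fun v _ => ?_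
  rw [← Finset.sum_add_distrib]
  exact Finset.sum_congr rfl fun u _ => by split <;> ring

lemma U1_quadForm (a b : ℕ) (x : (Fin 3 ⊕ (Fin a ⊕ Fin b)) → ℝ) :
    x ⬝ᵥ (signlessLap (U1 a b) *ᵥ x) =
      (x (Sum.inl 0) * x (Sum.inl 0) + x (Sum.inl 0) * x (Sum.inl 1))
      + (x (Sum.inl 0) * x (Sum.inl 0) + x (Sum.inl 0) * x (Sum.inl 2))
      + (x (Sum.inl 1) * x (Sum.inl 1) + x (Sum.inl 1) * x (Sum.inl 0))
      + (x (Sum.inl 1) * x (Sum.inl 1) + x (Sum.inl 1) * x (Sum.inl 2))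
      + (x (Sum.inl 2) * x (Sum.inl 2) + x (Sum.inl 2) * x (Sum.inl 0))
      + (x (Sum.inl 2) * x (Sum.inl 2) + x (Sum.inl 2) * x (Sum.inl 1))
      + (∑ i : Fin a, (x (Sum.inl 0) * x (Sum.inl 0) + x (Sum.inl 0) * x (Sum.inr (Sum.inl i))))
      + (∑ j : Fin b, (x (Sum.inl 1) * x (Sum.inl 1) + x (Sum.inl 1) * x (Sum.inr (Sum.inr j))))
      + (∑ i : Fin a, (x (Sum.inr (Sum.inl i)) * x (Sum.inr (Sum.inl i))
          + x (Sum.inr (Sum.inl i)) * x (Sum.inl 0)))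
      + (∑ j : Fin b, (x (Sum.inr (Sum.inr j)) * x (Sum.inr (Sum.inr j))
          + x (Sum.inr (Sum.inr j)) * x (Sum.inl 1))) := by
  rw [signlessLap_quadForm]
  rw [Fintype.sum_sum_type]
  simp only [Fintype.sum_sum_type, Fin.sum_univ_three, U1]
  norm_num [Fin.ext_iff]
  ring

lemma dot_self_expand (a b : ℕ) (x : (Fin 3 ⊕ (Fin a ⊕ Fin b)) → ℝ) :
    x ⬝ᵥ x = x (Sum.inl 0) * x (Sum.inl 0) + x (Sum.inl 1) * x (Sum.inl 1)
      + x (Sum.inl 2) * x (Sum.inl 2)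
      + (∑ i : Fin a, x (Sum.inr (Sum.inl i)) * x (Sum.inr (Sum.inl i)))
      + (∑ j : Fin b, x (Sum.inr (Sum.inr j)) * x (Sum.inr (Sum.inr j))) := by
  simp only [dotProduct, Fintype.sum_sum_type, Fin.sum_univ_three]
  ring

open Classical in
lemma countP_toList_map {α : Type*} [Fintype α] (f : α → ℝ) :
    ((Finset.univ.val.map f).toList).countP (fun x => decide ((2:ℝ) ≤ x))
      = (Finset.univ.filter fun i => 2 ≤ f i).card := by
  have h1 : ∀ (s : Multiset ℝ), s.toList.countP (fun x => decide ((2:ℝ) ≤ x))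
      = Multiset.countP (fun x => (2:ℝ) ≤ x) s := by
    intro s
    conv_rhs => rw [← Multiset.coe_toList s]
    rw [Multiset.coe_countP]
  rw [h1, Multiset.countP_map]
  rfl


lemma U1_ineq (a b : ℕ) (c : ℝ) (hcdef : c = -(((b:ℝ)+1)⁻¹))
    (y : (Fin 3 ⊕ (Fin a ⊕ Fin b)) → ℝ)
    (h0 : y (Sum.inl 0) = 0) (h12' : y (Sum.inl 1) = c * y (Sum.inl 2))
    (hy0 : ∃ v, y v ≠ 0) :
    y ⬝ᵥ (signlessLap (U1 a b) *ᵥ y) < 2 * (y ⬝ᵥ y) := by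
  have hb1 : (0:ℝ) < (b:ℝ)+1 := by positivity
  rw [U1_quadForm a b y, dot_self_expand a b y, h0]
  set z := y (Sum.inl 2) with hz
  have h12 : y (Sum.inl 1) = c * z := h12'
  rw [h12]
  set P2 := ∑ i : Fin a, y (Sum.inr (Sum.inl i)) * y (Sum.inr (Sum.inl i)) with hP2def
  set Q2 := ∑ j : Fin b, y (Sum.inr (Sum.inr j)) * y (Sum.inr (Sum.inr j)) with hQ2def
  set S := ∑ j : Fin b, y (Sum.inr (Sum.inr j)) with hSdef
  have e3 : (∑ i : Fin a, ((0:ℝ) * 0 + 0 * y (Sum.inr (Sum.inl i)))) = 0 := by simp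
  have e1 : (∑ j : Fin b, ((c*z) * (c*z) + (c*z) * y (Sum.inr (Sum.inr j))))
      = (b:ℝ) * ((c*z)*(c*z)) + (c*z) * S := by
    rw [Finset.sum_add_distrib, Finset.sum_const, ← Finset.mul_sum, ← hSdef]
    simp [mul_comm]
  have e4 : (∑ i : Fin a, (y (Sum.inr (Sum.inl i)) * y (Sum.inr (Sum.inl i))
      + y (Sum.inr (Sum.inl i)) * 0)) = P2 := by simp [hP2def]
  have e2 : (∑ j : Fin b, (y (Sum.inr (Sum.inr j)) * y (Sum.inr (Sum.inr j))
      + y (Sum.inr (Sum.inr j)) * (c*z))) = Q2 + S * (c*z) := by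
    rw [Finset.sum_add_distrib, ← Finset.sum_mul, ← hSdef, ← hQ2def]
  rw [e3, e1, e4, e2]
  have hP2nn : 0 ≤ P2 := Finset.sum_nonneg fun i _ => mul_self_nonneg _
  have hQ2nn : 0 ≤ Q2 := Finset.sum_nonneg fun j _ => mul_self_nonneg _
  have key : 2*((c*z)*S) ≤ (b:ℝ)*((c*z)*(c*z)) + Q2 := by
    have hterm : ∀ j : Fin b, 2*((c*z) * y (Sum.inr (Sum.inr j)))
        ≤ (c*z)*(c*z) + y (Sum.inr (Sum.inr j)) * y (Sum.inr (Sum.inr j)) := by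
      intro j
      nlinarith [sq_nonneg (c*z - y (Sum.inr (Sum.inr j)))]
    calc 2*((c*z)*S) = ∑ j : Fin b, 2*((c*z) * y (Sum.inr (Sum.inr j))) := by
          rw [hSdef, Finset.mul_sum, Finset.mul_sum]
      _ ≤ ∑ j : Fin b, ((c*z)*(c*z) + y (Sum.inr (Sum.inr j)) * y (Sum.inr (Sum.inr j))) :=
          Finset.sum_le_sum fun j _ => hterm j
      _ = (b:ℝ)*((c*z)*(c*z)) + Q2 := by
          rw [Finset.sum_add_distrib, Finset.sum_const, ← hQ2def]
          simp [mul_comm]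
  by_cases hzz : z = 0
  · have hpos : 0 < P2 + Q2 := by
      obtain ⟨v, hv⟩ := hy0
      rcases v with i | (i | j)
      · exfalso
        fin_cases i
        · exact hv h0
        · exact hv (show y (Sum.inl 1) = 0 by rw [h12, hzz, mul_zero])
        · exact hv hzz
      · have h1 : 0 < y (Sum.inr (Sum.inl i)) * y (Sum.inr (Sum.inl i)) :=
          mul_self_pos.mpr hv
        have h2 : y (Sum.inr (Sum.inl i)) * y (Sum.inr (Sum.inl i)) ≤ P2 := by
          rw [hP2def]
          exact Finset.single_le_sum
            (f := fun i => y (Sum.inr (Sum.inl i)) * y (Sum.inr (Sum.inl i)))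
            (fun i _ => mul_self_nonneg _) (Finset.mem_univ i)
        linarith
      · have h1 : 0 < y (Sum.inr (Sum.inr j)) * y (Sum.inr (Sum.inr j)) :=
          mul_self_pos.mpr hv
        have h2 : y (Sum.inr (Sum.inr j)) * y (Sum.inr (Sum.inr j)) ≤ Q2 := by
          rw [hQ2def]
          exact Finset.single_le_sum
            (f := fun j => y (Sum.inr (Sum.inr j)) * y (Sum.inr (Sum.inr j)))
            (fun j _ => mul_self_nonneg _) (Finset.mem_univ j)
        linarith
    rw [hzz]
    ring_nf
    nlinarith [hpos]
  · have hz2 : 0 < z * z := mul_self_pos.mpr hzz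
    have hbc : 1 + (b:ℝ)*c = ((b:ℝ)+1)⁻¹ := by
      rw [hcdef]; field_simp; ring
    have hinv : 0 < ((b:ℝ)+1)⁻¹ := by positivity
    have hcneg : c < 0 := by rw [hcdef]; linarith
    have hprod : 2*c*(1+(b:ℝ)*c)*(z*z) < 0 := by
      apply mul_neg_of_neg_of_pos _ hz2
      rw [hbc]
      nlinarith
    nlinarith [key, hP2nn, hQ2nn, hprod]

/-- For `n ≥ 5`, `a ≥ b ≥ 0` and `a ≥ 2`, the third largest signless Laplacian eigenvalue
of `U¹_n(a,b)` (with `a + b = n − 3`) is strictly less than `2`. -/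
theorem q3_U1_lt_two (n a b : ℕ) (hn : n = a + b + 3) (hn5 : 5 ≤ n)
    (hba : b ≤ a) (ha : 2 ≤ a) :
    qEig (U1 a b) 3 < 2 := by
  classical
  have hM : (signlessLap (U1 a b)).IsHermitian := signlessLap_isHermitian (U1 a b)
  set c : ℝ := -(((b:ℝ)+1)⁻¹) with hcdef
  set φ : EuclideanSpace ℝ (Fin 3 ⊕ (Fin a ⊕ Fin b)) →ₗ[ℝ] ℝ × ℝ :=
    { toFun := fun x => (x (Sum.inl 0), x (Sum.inl 1) - c * x (Sum.inl 2)),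
      map_add' := fun x y => by
        simp only [PiLp.add_apply, Prod.mk_add_mk, Prod.mk.injEq]
        exact ⟨trivial, by ring⟩
      map_smul' := fun r x => by
        simp only [PiLp.smul_apply, smul_eq_mul, RingHom.id_apply, Prod.smul_mk, Prod.mk.injEq]
        exact ⟨trivial, by ring⟩ } with hφ
  have hWrank : Fintype.card (Fin 3 ⊕ (Fin a ⊕ Fin b))
      ≤ Module.finrank ℝ (LinearMap.ker φ) + 2 := by
    have hrn := LinearMap.finrank_range_add_finrank_ker φ
    rw [finrank_euclideanSpace] at hrn
    have h2 : Module.finrank ℝ (LinearMap.range φ) ≤ 2 := by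
      have hle := Submodule.finrank_le (LinearMap.range φ)
      simpa using hle
    omega
  have hneg : ∀ x : EuclideanSpace ℝ (Fin 3 ⊕ (Fin a ⊕ Fin b)), x ∈ LinearMap.ker φ → x ≠ 0 →
      (WithLp.equiv 2 ((Fin 3 ⊕ (Fin a ⊕ Fin b)) → ℝ) x) ⬝ᵥ
          (signlessLap (U1 a b) *ᵥ (WithLp.equiv 2 ((Fin 3 ⊕ (Fin a ⊕ Fin b)) → ℝ) x)) <
        2 * ((WithLp.equiv 2 ((Fin 3 ⊕ (Fin a ⊕ Fin b)) → ℝ) x) ⬝ᵥ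
          (WithLp.equiv 2 ((Fin 3 ⊕ (Fin a ⊕ Fin b)) → ℝ) x)) := by
    intro x hxW hx0
    have hker : φ x = 0 := LinearMap.mem_ker.mp hxW
    have h0 : (WithLp.equiv 2 _ x) (Sum.inl 0) = 0 := congrArg Prod.fst hker
    have h12' : (WithLp.equiv 2 _ x) (Sum.inl 1) - c * (WithLp.equiv 2 _ x) (Sum.inl 2) = 0 :=
      congrArg Prod.snd hker
    refine U1_ineq a b c hcdef _ h0 (by linarith) ?_
    by_contra hall
    push_neg at hall
    exact hx0 (by ext v; exact hall v)
  have hcount := count_le_two hM (LinearMap.ker φ) hWrank hneg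
  -- list part
  show (((Finset.univ.val.map hM.eigenvalues).toList.mergeSort
      (fun a b => decide (b ≤ a))).getD (3 - 1) 0) < 2
  apply list_lemma
  · rw [List.length_mergeSort, Multiset.length_toList, Multiset.card_map]
    have h3 : Multiset.card (Finset.univ.val : Multiset (Fin 3 ⊕ (Fin a ⊕ Fin b)))
        = Fintype.card (Fin 3 ⊕ (Fin a ⊕ Fin b)) := rfl
    have h4 : Fintype.card (Fin 3 ⊕ (Fin a ⊕ Fin b)) = 3 + (a + b) := by simp
    omega
  · have hp := List.pairwise_mergeSort
      (le := fun x y : ℝ => decide (y ≤ x))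
      (fun x y w h1 h2 => by
        simp only [decide_eq_true_eq] at *
        exact le_trans h2 h1)
      (fun x y => by simpa using le_total y x)
      ((Finset.univ.val.map hM.eigenvalues).toList)
    exact hp.imp (by simp)
  · rw [List.Perm.countP_eq _ (List.mergeSort_perm _ _), countP_toList_map]
    exact hcount
end

section
/- Let G be a connected graph with n vertices consisting of a subgraph H (with at least two vertices) together with n−|H| distinct pendant vertices (not in H) all attached to a single vertex v of H. Then the signless Laplacian characteristic polynomial of G satisfies ψ(G,x) = (x−1)^{n−|H|} ψ(H,x) − (n−|H|) x (x−1)^{n−|H|−1} ψ(Q_v(H),x). -/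
open Matrix Polynomial

/-- The graph obtained from `H` by attaching `p` distinct pendant vertices to the vertex
`v` of `H`. -/
def attachPendants {m : ℕ} (H : SimpleGraph (Fin m)) (v : Fin m) (p : ℕ) :
    SimpleGraph (Fin m ⊕ Fin p) where
  Adj x y := match x, y with
    | .inl a, .inl b => H.Adj a b
    | .inl a, .inr _ => a = v
    | .inr _, .inl a => a = v
    | .inr _, .inr _ => False
  symm := by
    refine ⟨?_⟩
    rintro (a | a) (b | b) h
    · exact SimpleGraph.Adj.symm h
    · exact h
    · exact h
    · exact h.elim
  loopless := by
    refine ⟨?_⟩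
    rintro (a | a) h
    · exact SimpleGraph.irrefl H h
    · exact h


lemma eval_charpoly' {n : Type*} [Fintype n] [DecidableEq n] (M : Matrix n n ℝ) (x : ℝ) :
    M.charpoly.eval x = (x • (1 : Matrix n n ℝ) - M).det := by
  rw [Matrix.charpoly, ← Polynomial.coe_evalRingHom, RingHom.map_det]
  congr 1
  ext i j
  by_cases h : i = j <;>
    simp [h, Matrix.charmatrix_apply_eq, Matrix.charmatrix_apply_ne, Matrix.one_apply, *]

lemma det_updateRow_single {m : ℕ} (M : Matrix (Fin m) (Fin m) ℝ) (v : Fin m) :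
    (M.updateRow v (Pi.single v 1)).det =
      (M.submatrix (Subtype.val : {w : Fin m // w ≠ v} → Fin m) Subtype.val).det := by
  classical
  let e : {a : Fin m // a ≠ v} ⊕ {a : Fin m // ¬ a ≠ v} ≃ Fin m := Equiv.sumCompl _
  rw [← Matrix.det_submatrix_equiv_self e]
  have : (M.updateRow v (Pi.single v 1)).submatrix e e =
      Matrix.fromBlocks (M.submatrix Subtype.val Subtype.val)
        (Matrix.of fun (i : {a : Fin m // a ≠ v}) (j : {a : Fin m // ¬ a ≠ v}) => M i.val j.val)
        0 1 := by
    ext i j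
    rcases i with i | i <;> rcases j with j | j <;>
      simp only [Matrix.submatrix_apply, Equiv.sumCompl_apply_inl, Equiv.sumCompl_apply_inr,
        Matrix.fromBlocks_apply₁₁, Matrix.fromBlocks_apply₁₂, Matrix.fromBlocks_apply₂₁,
        Matrix.fromBlocks_apply₂₂, Matrix.updateRow_apply, e]
    · simp [i.2]
    · simp [i.2]
    · have hi : (i : Fin m) = v := not_not.mp i.2
      simp [hi, Pi.single_apply, j.2, (Ne.symm j.2 : ¬ v = (j:Fin m))]
    · have hi : (i : Fin m) = v := not_not.mp i.2
      have hj : (j : Fin m) = v := not_not.mp j.2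
      have hij : i = j := Subtype.ext (hi.trans hj.symm)
      simp [hi, hj, hij, Pi.single_apply, Matrix.one_apply]
  rw [this, Matrix.det_fromBlocks_zero₂₁, Matrix.det_one, mul_one]

lemma det_sub_smul_std {m : ℕ} (M : Matrix (Fin m) (Fin m) ℝ) (v : Fin m) (t : ℝ) :
    (M - t • Matrix.single v v 1).det =
      M.det - t * (M.submatrix (Subtype.val : {w : Fin m // w ≠ v} → Fin m) Subtype.val).det := by
  classical
  have h1 : M - t • Matrix.single v v 1 =
      M.updateRow v (M v + (-t) • (Pi.single v 1 : Fin m → ℝ)) := by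
    ext a b
    by_cases ha : a = v <;> by_cases hb : b = v <;>
      simp [Matrix.updateRow_apply, Matrix.single, Pi.single_apply, ha, hb,
        sub_eq_add_neg, eq_comm] <;>
      simp [if_neg, ha, hb, Ne.symm]
  rw [h1, Matrix.det_updateRow_add, Matrix.det_updateRow_smul, Matrix.updateRow_eq_self,
    det_updateRow_single, neg_mul, ← sub_eq_add_neg]

open Classical in
lemma attach_degree_inr {m : ℕ} (H : SimpleGraph (Fin m)) (v : Fin m) {p : ℕ}
    (j : Fin p) : (attachPendants H v p).degree (Sum.inr j) = 1 := by
  classical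
  have h : (attachPendants H v p).neighborFinset (Sum.inr j) = {Sum.inl v} := by
    ext y
    rcases y with a | a <;>
      simp only [SimpleGraph.mem_neighborFinset] <;> simp [attachPendants]
  rw [← SimpleGraph.card_neighborFinset_eq_degree, h, Finset.card_singleton]

open Classical in
lemma attach_degree_inl {m : ℕ} (H : SimpleGraph (Fin m)) (v : Fin m) {p : ℕ}
    (a : Fin m) : (attachPendants H v p).degree (Sum.inl a) =
      H.degree a + (if a = v then p else 0) := by
  classical
  by_cases ha : a = v
  · subst ha
    have h : (attachPendants H a p).neighborFinset (Sum.inl a) =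
        (H.neighborFinset a).map ⟨Sum.inl, Sum.inl_injective⟩ ∪
          (Finset.univ : Finset (Fin p)).map ⟨Sum.inr, Sum.inr_injective⟩ := by
      ext y
      rcases y with b | b <;>
        simp only [SimpleGraph.mem_neighborFinset] <;> simp [attachPendants, SimpleGraph.adj_comm]
    rw [← SimpleGraph.card_neighborFinset_eq_degree, h, Finset.card_union_of_disjoint, Finset.card_map,
      Finset.card_map, Finset.card_univ, Fintype.card_fin]
    · simp [← SimpleGraph.card_neighborFinset_eq_degree]
    · simp [Finset.disjoint_left]
  · have h : (attachPendants H v p).neighborFinset (Sum.inl a) =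
        (H.neighborFinset a).map ⟨Sum.inl, Sum.inl_injective⟩ := by
      ext y
      rcases y with b | b <;>
        simp only [SimpleGraph.mem_neighborFinset] <;> simp [attachPendants, ha]
    rw [← SimpleGraph.card_neighborFinset_eq_degree, h, Finset.card_map]
    simp [ha, ← SimpleGraph.card_neighborFinset_eq_degree]

/-- If the connected graph `G` consists of a subgraph `H` (with at least two vertices)
together with `p = n − |H|` pendant vertices attached to the vertex `v` of `H`, then
`ψ(G,x) = (x−1)^p ψ(H,x) − p·x·(x−1)^{p−1} ψ(Q_v(H),x)`, where `ψ` denotes the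
characteristic polynomial `det(xI − ·)` and `Q_v(H)` is the principal submatrix of `Q(H)`
obtained by deleting the row and column of `v`. -/
theorem charpoly_attachPendants {m : ℕ} (hm : 2 ≤ m) (H : SimpleGraph (Fin m))
    (v : Fin m) (p : ℕ) (hp : 1 ≤ p) (hconn : (attachPendants H v p).Connected) :
    (signlessLap (attachPendants H v p)).charpoly =
      (X - 1) ^ p * (signlessLap H).charpoly -
        C (p : ℝ) * X * (X - 1) ^ (p - 1) *
          ((signlessLap H).submatrix (Subtype.val : {w : Fin m // w ≠ v} → Fin m)
            Subtype.val).charpoly := by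
  classical
  apply Polynomial.eq_of_infinite_eval_eq
  apply Set.Infinite.mono (s := {x : ℝ | x ≠ 1})
  swap
  · exact (Set.finite_singleton (1:ℝ)).infinite_compl
  intro x hx
  have hx1 : x - 1 ≠ 0 := sub_ne_zero.mpr hx
  simp only [Set.mem_setOf_eq]
  set QH := signlessLap H with hQH
  set A : Matrix (Fin m) (Fin m) ℝ :=
    x • 1 - QH - (p : ℝ) • Matrix.single v v 1 with hA
  set B : Matrix (Fin m) (Fin p) ℝ :=
    Matrix.of fun a _ => if a = v then (-1 : ℝ) else 0 with hB
  set Ct : Matrix (Fin p) (Fin m) ℝ :=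
    Matrix.of fun _ a => if a = v then (-1 : ℝ) else 0 with hCt
  set D : Matrix (Fin p) (Fin p) ℝ := (x - 1) • 1 with hD
  have hblock : x • (1 : Matrix (Fin m ⊕ Fin p) (Fin m ⊕ Fin p) ℝ) -
      signlessLap (attachPendants H v p) = Matrix.fromBlocks A B Ct D := by
    ext i j
    rcases i with a | a <;> rcases j with b | b
    · have hadj : (attachPendants H v p).Adj (Sum.inl a) (Sum.inl b) ↔ H.Adj a b := Iff.rfl
      simp only [Matrix.sub_apply, Matrix.smul_apply, Matrix.one_apply, signlessLap,
        Matrix.add_apply, SimpleGraph.degMatrix, Matrix.diagonal_apply, Sum.inl.injEq,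
        SimpleGraph.adjMatrix_apply, attach_degree_inl, Matrix.fromBlocks_apply₁₁, hA, hQH,
        Matrix.single, Matrix.of_apply, smul_eq_mul, hadj]
      by_cases hab : a = b
      · subst hab
        by_cases hav : a = v
        · simp [hav, H.irrefl]
          push_cast
          ring
        · simp [hav, H.irrefl, (show ¬ v = a from fun h => hav h.symm)]
      · have hab' : ¬ (v = a ∧ v = b) := by rintro ⟨h1, h2⟩; exact hab (h1.symm.trans h2)
        simp [hab, hab']
    · by_cases hav : a = v <;>
        simp only [signlessLap, Matrix.sub_apply, Matrix.add_apply, SimpleGraph.adjMatrix_apply] <;>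
        simp [hB, hQH, signlessLap, SimpleGraph.degMatrix, attachPendants,
          Matrix.one_apply, Matrix.diagonal_apply, hav,
          Matrix.smul_apply, Matrix.sub_apply, Matrix.add_apply]
    · by_cases hbv : b = v <;>
        simp only [signlessLap, Matrix.sub_apply, Matrix.add_apply, SimpleGraph.adjMatrix_apply] <;>
        simp [hCt, hQH, signlessLap, SimpleGraph.degMatrix, attachPendants,
          Matrix.one_apply, Matrix.diagonal_apply, hbv,
          Matrix.smul_apply, Matrix.sub_apply, Matrix.add_apply]
    · have hadj : ¬ (attachPendants H v p).Adj (Sum.inr a) (Sum.inr b) := fun h => h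
      simp only [Matrix.sub_apply, Matrix.smul_apply, Matrix.one_apply, signlessLap,
        Matrix.add_apply, SimpleGraph.degMatrix, Matrix.diagonal_apply, Sum.inr.injEq,
        SimpleGraph.adjMatrix_apply, attach_degree_inr, hD, smul_eq_mul,
        Matrix.fromBlocks_apply₂₂, if_neg hadj]
      by_cases hab : a = b <;> simp [hab] <;> ring
  haveI hDinv : Invertible D := by
    refine ⟨(x - 1)⁻¹ • 1, ?_, ?_⟩
    · simp only [hD, Matrix.smul_mul, Matrix.mul_smul, smul_smul, Matrix.one_mul]
      rw [mul_inv_cancel₀ hx1, one_smul]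
    · simp only [hD, Matrix.smul_mul, Matrix.mul_smul, smul_smul, Matrix.one_mul]
      rw [inv_mul_cancel₀ hx1, one_smul]
  have hinvD : (⅟D : Matrix (Fin p) (Fin p) ℝ) = (x - 1)⁻¹ • 1 := by
    apply invOf_eq_right_inv
    simp only [hD, Matrix.smul_mul, Matrix.mul_smul, smul_smul, Matrix.one_mul]
    rw [show (x - 1)⁻¹ * (x - 1) = 1 from inv_mul_cancel₀ hx1, one_smul]
  have hBC : B * ⅟D * Ct = ((p : ℝ) * (x - 1)⁻¹) • Matrix.single v v 1 := by
    rw [hinvD]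
    ext a b
    by_cases hav : v = a <;> by_cases hbv : v = b <;>
      simp [hB, hCt, Matrix.mul_apply, Matrix.one_apply, Matrix.single,
        hav, hbv, eq_comm, Matrix.smul_apply, mul_comm] <;>
      split_ifs <;> ring
  have hAsub : A - B * ⅟D * Ct =
      (x • 1 - QH) - ((p : ℝ) + (p : ℝ) * (x - 1)⁻¹) • Matrix.single v v 1 := by
    rw [hBC, hA]
    module
  have hdet := eval_charpoly' (signlessLap (attachPendants H v p)) x
  rw [hblock, Matrix.det_fromBlocks₂₂, hAsub, det_sub_smul_std] at hdet
  have hdetD : D.det = (x - 1) ^ p := by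
    simp [hD, Matrix.det_smul]
  have hsub : x • (1 : Matrix {w : Fin m // w ≠ v} {w : Fin m // w ≠ v} ℝ) -
      QH.submatrix (Subtype.val : {w : Fin m // w ≠ v} → Fin m) Subtype.val =
      (x • 1 - QH).submatrix (Subtype.val : {w : Fin m // w ≠ v} → Fin m) Subtype.val := by
    ext i j
    simp [Matrix.one_apply, Subtype.ext_iff, Matrix.submatrix_apply]
  rw [hdet, hdetD]
  simp only [eval_sub, eval_mul, eval_pow, eval_one, eval_X, eval_C, eval_charpoly', hsub]
  have hpow : (x - 1) ^ p = (x - 1) ^ (p - 1) * (x - 1) := by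
    conv_lhs => rw [show p = (p - 1) + 1 from (Nat.succ_pred_eq_of_pos hp).symm]
    rw [pow_succ]
  rw [hpow]
  field_simp
  ring
end
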